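/- Let d ≥ 1 be an integer and a : ℝ^d → ℝ measurable with a ∈ L¹(ℝ^d) and a(x) = o(‖x‖^{−d}) as ‖x‖ → ∞ (i.e. ‖x‖^d·|a(x)| → 0 essentially as ‖x‖ → ∞). Then for every t > 0 and every η > 0 there exists R > 0 such that for a.e. x with ‖x‖ ≥ R one has |(g_t ⋆ a)(x)| ≤ η·‖x‖^{−d}; that is, for each fixed t > 0, (g_t ⋆ a)(x) = o(‖x‖^{−d}) as ‖x‖ → ∞. -/

import Mathlib

open MeasureTheory Filter

set_option maxHeartbeats 1000000

/-- If `a ∈ L¹(ℝ^d)` and `a(x) = o(‖x‖^{−d})` essentially as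
`‖x‖ → ∞`, then for each fixed `t > 0` the heat extension satisfies
`(g_t ⋆ a)(x) = o(‖x‖^{−d})` as `‖x‖ → ∞`: for every `η > 0` there is `R > 0`
such that `|(g_t ⋆ a)(x)| ≤ η ‖x‖^{−d}` for a.e. `x` with `‖x‖ ≥ R`. -/
theorem stmt9 (d : ℕ) (hd : 1 ≤ d)
    (a : EuclideanSpace ℝ (Fin d) → ℝ) (ha : Integrable a)
    (hdecay : ∀ η : ℝ, 0 < η → ∃ R : ℝ,
      ∀ᵐ x : EuclideanSpace ℝ (Fin d) ∂volume, R ≤ ‖x‖ → ‖x‖ ^ d * |a x| ≤ η) :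
    ∀ t : ℝ, 0 < t → ∀ η : ℝ, 0 < η → ∃ R > (0 : ℝ),
      ∀ᵐ x : EuclideanSpace ℝ (Fin d) ∂volume, R ≤ ‖x‖ →
        |∫ y, (4 * Real.pi * t) ^ (-(d : ℝ) / 2) * Real.exp (-‖x - y‖ ^ 2 / (4 * t)) * a y| ≤
          η * ‖x‖ ^ (-(d : ℝ)) := by
  intro t ht η hη
  have hb0 : (0:ℝ) < (4 * t)⁻¹ := by positivity
  set b : ℝ := (4 * t)⁻¹ with hbdef
  set C : ℝ := (4 * Real.pi * t) ^ (-(d : ℝ) / 2) with hCdef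
  have hC0 : 0 < C := Real.rpow_pos_of_pos (by positivity) _
  -- Gaussian integrability
  have hgauss : Integrable (fun y : EuclideanSpace ℝ (Fin d) => Real.exp (-(b * ‖y‖ ^ 2))) := by
    have h := (GaussianFourier.integrable_cexp_neg_mul_sq_norm_add_of_euclideanSpace
      (b := (b : ℂ)) (by simpa using hb0) 0 (0 : EuclideanSpace ℝ (Fin d))).norm
    refine h.congr (Filter.Eventually.of_forall fun y => ?_)
    simp [Complex.norm_exp, ← Complex.ofReal_pow]
  set G : ℝ := ∫ y : EuclideanSpace ℝ (Fin d), Real.exp (-(b * ‖y‖ ^ 2)) with hGdef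
  have hG0 : 0 ≤ G := integral_nonneg fun y => (Real.exp_pos _).le
  set I : ℝ := ∫ y, |a y| with hIdef
  have hI0 : 0 ≤ I := integral_nonneg fun y => abs_nonneg _
  have hCG : 0 ≤ C * G := mul_nonneg hC0.le hG0
  have hden : (0:ℝ) < 2 ^ (d + 1) * (C * G + 1) := by
    have h2 : (0:ℝ) < 2 ^ (d + 1) := by positivity
    nlinarith
  set ε : ℝ := η / (2 ^ (d + 1) * (C * G + 1)) with hεdef
  have hε : 0 < ε := div_pos hη hden
  obtain ⟨R₀, hR₀⟩ := hdecay ε hε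
  -- the inner-region bound via decay of r^d exp(-(b/4) r^2)
  have htend : Tendsto (fun r : ℝ => C * I * (r ^ d * Real.exp (-(b/4) * r ^ 2)))
      atTop (nhds 0) := by
    have h1 : (fun r : ℝ => r ^ (d:ℝ) * Real.exp (-(b/4) * r ^ 2)) =o[atTop]
        fun r => Real.exp (-(1/2) * r) :=
      rpow_mul_exp_neg_mul_sq_isLittleO_exp_neg (by linarith : (0:ℝ) < b / 4) _
    have hhalf : Tendsto (fun r : ℝ => Real.exp (-(1/2) * r)) atTop (nhds 0) := by
      have hlin : Tendsto (fun r : ℝ => -(1/2 : ℝ) * r) atTop atBot :=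
        (tendsto_const_mul_atBot_of_neg (by norm_num : (-(1/2):ℝ) < 0)).2 tendsto_id
      exact Real.tendsto_exp_atBot.comp hlin
    have h2 : Tendsto (fun r : ℝ => r ^ (d:ℝ) * Real.exp (-(b/4) * r ^ 2)) atTop (nhds 0) :=
      h1.isBigO.trans_tendsto hhalf
    have h3 : Tendsto (fun r : ℝ => r ^ d * Real.exp (-(b/4) * r ^ 2)) atTop (nhds 0) := by
      refine h2.congr' ?_
      filter_upwards [eventually_ge_atTop (0:ℝ)] with r hr
      rw [Real.rpow_natCast]
    simpa using h3.const_mul (C * I)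
  have hev : ∀ᶠ r : ℝ in atTop, C * I * (r ^ d * Real.exp (-(b/4) * r ^ 2)) ≤ η / 2 :=
    htend.eventually_le_const (half_pos hη)
  obtain ⟨R₁, hR₁⟩ := eventually_atTop.1 hev
  refine ⟨max R₁ (2 * |R₀| + 2), lt_of_lt_of_le (by positivity) (le_max_right _ _), ?_⟩
  refine Filter.Eventually.of_forall fun x hx => ?_
  have hx2 : (2:ℝ) ≤ ‖x‖ := by
    have h := le_trans (le_max_right R₁ (2 * |R₀| + 2)) hx
    have := abs_nonneg R₀
    linarith
  have hx0 : (0:ℝ) < ‖x‖ := by linarith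
  have hxR0 : R₀ ≤ ‖x‖ / 2 := by
    have h := le_trans (le_max_right R₁ (2 * |R₀| + 2)) hx
    have := le_abs_self R₀
    linarith
  have hxR1 : R₁ ≤ ‖x‖ := le_trans (le_max_left _ _) hx
  have hexpz : ∀ z : ℝ, -z / (4 * t) = -(b * z) := fun z => by rw [hbdef]; ring
  have hrw : (∫ y, C * Real.exp (-‖x - y‖ ^ 2 / (4 * t)) * a y)
      = ∫ y, C * Real.exp (-(b * ‖x - y‖ ^ 2)) * a y :=
    integral_congr_ae (Filter.Eventually.of_forall fun y => by simp only [hexpz])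
  rw [hrw]
  -- integrability facts
  have hcont : Continuous fun y : EuclideanSpace ℝ (Fin d) =>
      C * Real.exp (-(b * ‖x - y‖ ^ 2)) := by fun_prop
  have hexp_le_one : ∀ z : ℝ, 0 ≤ z → Real.exp (-(b * z)) ≤ 1 := fun z hz => by
    calc Real.exp (-(b * z)) ≤ Real.exp 0 :=
          Real.exp_le_exp.mpr (by nlinarith)
      _ = 1 := Real.exp_zero
  have hFi : Integrable (fun y => C * Real.exp (-(b * ‖x - y‖ ^ 2)) * a y) := by
    refine ha.bdd_mul (c := C) hcont.aestronglyMeasurable (Filter.Eventually.of_forall fun y => ?_)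
    rw [Real.norm_eq_abs, abs_of_pos (mul_pos hC0 (Real.exp_pos _))]
    have h1 := hexp_le_one (‖x - y‖ ^ 2) (by positivity)
    nlinarith
  have hgx : Integrable (fun y : EuclideanSpace ℝ (Fin d) =>
      Real.exp (-(b * ‖x - y‖ ^ 2))) :=
    (integrable_comp_sub_left (fun z : EuclideanSpace ℝ (Fin d) =>
      Real.exp (-(b * ‖z‖ ^ 2))) x).2 hgauss
  set s : Set (EuclideanSpace ℝ (Fin d)) := {y | ‖y‖ < ‖x‖ / 2} with hsdef
  have hs : MeasurableSet s := measurableSet_lt measurable_norm measurable_const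
  have hxd : (0:ℝ) < ‖x‖ ^ d := by positivity
  -- inner region estimate
  have hinner : ∫ y in s, |C * Real.exp (-(b * ‖x - y‖ ^ 2)) * a y|
      ≤ η / 2 / ‖x‖ ^ d := by
    have hmono : ∫ y in s, |C * Real.exp (-(b * ‖x - y‖ ^ 2)) * a y|
        ≤ ∫ y in s, C * Real.exp (-(b/4) * ‖x‖ ^ 2) * |a y| := by
      refine setIntegral_mono_on hFi.abs.integrableOn
        ((ha.abs.const_mul _).integrableOn) hs fun y hy => ?_
      have hy' : ‖y‖ < ‖x‖ / 2 := hy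
      have hdist : ‖x‖ / 2 ≤ ‖x - y‖ := by
        have := norm_sub_norm_le x y
        linarith
      have hsq : (‖x‖ / 2) ^ 2 ≤ ‖x - y‖ ^ 2 :=
        pow_le_pow_left₀ (by positivity) hdist 2
      have hexp : Real.exp (-(b * ‖x - y‖ ^ 2)) ≤ Real.exp (-(b/4) * ‖x‖ ^ 2) := by
        apply Real.exp_le_exp.2
        nlinarith [mul_le_mul_of_nonneg_left hsq hb0.le]
      rw [abs_mul, abs_mul, abs_of_pos hC0, abs_of_pos (Real.exp_pos _)]
      gcongr
    refine hmono.trans ?_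
    have hle2 : ∫ y in s, C * Real.exp (-(b/4) * ‖x‖ ^ 2) * |a y|
        ≤ ∫ y, C * Real.exp (-(b/4) * ‖x‖ ^ 2) * |a y| :=
      setIntegral_le_integral (ha.abs.const_mul _)
        (Filter.Eventually.of_forall fun y =>
          mul_nonneg (mul_nonneg hC0.le (Real.exp_pos _).le) (abs_nonneg _))
    refine hle2.trans ?_
    rw [integral_const_mul, ← hIdef, le_div_iff₀ hxd]
    have hkey := hR₁ ‖x‖ hxR1
    linarith [hkey, le_of_eq (show C * Real.exp (-(b/4) * ‖x‖ ^ 2) * I * ‖x‖ ^ d = C * I * (‖x‖ ^ d * Real.exp (-(b/4) * ‖x‖ ^ 2)) from by ring)]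
  -- outer region estimate
  have houter : ∫ y in sᶜ, |C * Real.exp (-(b * ‖x - y‖ ^ 2)) * a y|
      ≤ η / 2 / ‖x‖ ^ d := by
    have hM0 : (0:ℝ) ≤ ε * 2 ^ d / ‖x‖ ^ d :=
      div_nonneg (mul_nonneg hε.le (by positivity)) hxd.le
    have hmono : ∫ y in sᶜ, |C * Real.exp (-(b * ‖x - y‖ ^ 2)) * a y|
        ≤ ∫ y in sᶜ, (C * (ε * 2 ^ d / ‖x‖ ^ d)) * Real.exp (-(b * ‖x - y‖ ^ 2)) := by
      refine setIntegral_mono_ae_restrict hFi.abs.integrableOn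
        ((hgx.const_mul _).integrableOn) ?_
      filter_upwards [ae_restrict_of_ae hR₀, ae_restrict_mem hs.compl] with y hy hymem
      have hyn : ‖x‖ / 2 ≤ ‖y‖ := not_lt.1 hymem
      have hy0 : (0:ℝ) < ‖y‖ := by linarith
      have ha' : ‖y‖ ^ d * |a y| ≤ ε := hy (le_trans hxR0 hyn)
      have hyd : (0:ℝ) < ‖y‖ ^ d := by positivity
      have haa : |a y| ≤ ε * 2 ^ d / ‖x‖ ^ d := by
        have h1 : |a y| ≤ ε / ‖y‖ ^ d := by
          rw [le_div_iff₀ hyd]; linarith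
        refine h1.trans ?_
        rw [div_le_div_iff₀ hyd hxd]
        have hxy : ‖x‖ ^ d ≤ (2 * ‖y‖) ^ d :=
          pow_le_pow_left₀ (norm_nonneg x) (by linarith) d
        calc ε * ‖x‖ ^ d ≤ ε * (2 * ‖y‖) ^ d :=
              mul_le_mul_of_nonneg_left hxy hε.le
          _ = ε * 2 ^ d * ‖y‖ ^ d := by rw [mul_pow]; ring
      rw [abs_mul, abs_mul, abs_of_pos hC0, abs_of_pos (Real.exp_pos _)]
      calc C * Real.exp (-(b * ‖x - y‖ ^ 2)) * |a y|
          ≤ C * Real.exp (-(b * ‖x - y‖ ^ 2)) * (ε * 2 ^ d / ‖x‖ ^ d) := by gcongr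
        _ = (C * (ε * 2 ^ d / ‖x‖ ^ d)) * Real.exp (-(b * ‖x - y‖ ^ 2)) := by ring
    refine hmono.trans ?_
    have h2 : ∫ y in sᶜ, (C * (ε * 2 ^ d / ‖x‖ ^ d)) * Real.exp (-(b * ‖x - y‖ ^ 2))
        ≤ ∫ y, (C * (ε * 2 ^ d / ‖x‖ ^ d)) * Real.exp (-(b * ‖x - y‖ ^ 2)) :=
      setIntegral_le_integral (hgx.const_mul _)
        (Filter.Eventually.of_forall fun y =>
          mul_nonneg (mul_nonneg hC0.le hM0) (Real.exp_pos _).le)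
    refine h2.trans ?_
    rw [integral_const_mul]
    have hGval : (∫ y, Real.exp (-(b * ‖x - y‖ ^ 2))) = G := by
      rw [hGdef]
      exact integral_sub_left_eq_self
        (fun z : EuclideanSpace ℝ (Fin d) => Real.exp (-(b * ‖z‖ ^ 2))) volume x
    rw [hGval]
    have hεval : ε * (2 ^ (d + 1) * (C * G + 1)) = η := by
      rw [hεdef]; field_simp
    have h2pow : (2:ℝ) ^ (d + 1) = 2 * 2 ^ d := by rw [pow_succ]; ring
    have hhalf : ε * 2 ^ d * (C * G + 1) = η / 2 := by
      rw [h2pow] at hεval; linarith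
    have hkey : C * G * (ε * 2 ^ d) ≤ η / 2 := by
      nlinarith [mul_nonneg hε.le (show (0:ℝ) ≤ 2 ^ d by positivity)]
    calc C * (ε * 2 ^ d / ‖x‖ ^ d) * G = C * G * (ε * 2 ^ d) / ‖x‖ ^ d := by ring
      _ ≤ η / 2 / ‖x‖ ^ d := by gcongr
  calc |∫ y, C * Real.exp (-(b * ‖x - y‖ ^ 2)) * a y|
      ≤ ∫ y, |C * Real.exp (-(b * ‖x - y‖ ^ 2)) * a y| := by
        simpa only [Real.norm_eq_abs] using
          norm_integral_le_integral_norm (μ := volume)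
            (fun y => C * Real.exp (-(b * ‖x - y‖ ^ 2)) * a y)
    _ = (∫ y in s, |C * Real.exp (-(b * ‖x - y‖ ^ 2)) * a y|)
        + ∫ y in sᶜ, |C * Real.exp (-(b * ‖x - y‖ ^ 2)) * a y| :=
        (integral_add_compl hs hFi.abs).symm
    _ ≤ η / 2 / ‖x‖ ^ d + η / 2 / ‖x‖ ^ d := add_le_add hinner houter
    _ = η * ‖x‖ ^ (-(d : ℝ)) := by
        rw [Real.rpow_neg (norm_nonneg x), Real.rpow_natCast]
        field_simp
        ring
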